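/- Fix λ with 2λ > d + 2 and let ε > 0 and probability measures μ, ν on R^d with Fourier functionals F_k. For κ(x) = (1/ε) ∫ Re(F_k(μ-ν) f_k^*(x)) / (1+|k|^2)^λ dk, the signed-measure pairing satisfies ∫ ∇²κ(x) d(μ-ν)(x) = −(1/ε) ∫_{R^d} |F_k(μ-ν)|^2 k k^T / (1+|k|^2)^λ dk; in particular this matrix is negative semidefinite. -/

import Mathlib

set_option linter.unusedSectionVars false
set_option maxHeartbeats 1000000
open MeasureTheory Complex Module

noncomputable def charF (d : ℕ) (ρ : Measure (EuclideanSpace ℝ (Fin d)))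
    (k : EuclideanSpace ℝ (Fin d)) : ℂ :=
  ((2 * Real.pi) ^ (-(d : ℝ) / 2) : ℝ) *
    ∫ x, Complex.exp (Complex.I * ((inner ℝ k x : ℝ) : ℂ)) ∂ρ

noncomputable def fourierKer (d : ℕ) (k x : EuclideanSpace ℝ (Fin d)) : ℂ :=
  ((2 * Real.pi) ^ (-(d : ℝ) / 2) : ℝ) *
    Complex.exp (Complex.I * ((inner ℝ k x : ℝ) : ℂ))

noncomputable def kappaFn (d : ℕ) (lam ε : ℝ)
    (μ ν : Measure (EuclideanSpace ℝ (Fin d))) (x : EuclideanSpace ℝ (Fin d)) : ℝ :=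
  (1 / ε) * ∫ k : EuclideanSpace ℝ (Fin d),
    ((charF d μ k - charF d ν k) * (starRingEnd ℂ) (fourierKer d k x)).re /
      (1 + ‖k‖ ^ 2) ^ lam

/-- The `(i,j)` entry of the Hessian `∇²κ(x)`. -/
noncomputable def hessEntry (d : ℕ) (κ : EuclideanSpace ℝ (Fin d) → ℝ)
    (x : EuclideanSpace ℝ (Fin d)) (i j : Fin d) : ℝ :=
  fderiv ℝ (fun y => fderiv ℝ κ y (EuclideanSpace.single j 1)) x
    (EuclideanSpace.single i 1)



noncomputable section AuxStmt7

variable {d : ℕ}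

/-- `e^{i⟨w,x⟩}` -/
noncomputable def eK (w x : EuclideanSpace ℝ (Fin d)) : ℂ :=
  Complex.exp (Complex.I * ((inner ℝ w x : ℝ) : ℂ))

lemma norm_eK (w x : EuclideanSpace ℝ (Fin d)) : ‖eK w x‖ = 1 := by
  simp [eK, Complex.norm_exp]

/-- derivative CLM of `x ↦ (z * eK w x).re` -/
noncomputable def DK (z : ℂ) (w x : EuclideanSpace ℝ (Fin d)) :
    EuclideanSpace ℝ (Fin d) →L[ℝ] ℝ :=
  Complex.reCLM.comp ((z * eK w x * Complex.I) • (Complex.ofRealCLM.comp (innerSL ℝ w)))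

lemma DK_apply (z : ℂ) (w x v : EuclideanSpace ℝ (Fin d)) :
    DK z w x v = (z * eK w x * Complex.I * ((inner ℝ w v : ℝ) : ℂ)).re := by
  simp [DK]

lemma hasFDerivAt_DK (z : ℂ) (w x : EuclideanSpace ℝ (Fin d)) :
    HasFDerivAt (fun y : EuclideanSpace ℝ (Fin d) => (z * eK w y).re) (DK z w x) x := by
  have h1 : HasFDerivAt (fun y : EuclideanSpace ℝ (Fin d) => ((inner ℝ w y : ℝ) : ℂ))
      (Complex.ofRealCLM.comp (innerSL ℝ w)) x :=
    Complex.ofRealCLM.hasFDerivAt.comp x (innerSL ℝ w).hasFDerivAt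
  have h2 : HasFDerivAt (fun y : EuclideanSpace ℝ (Fin d) => Complex.I * ((inner ℝ w y : ℝ) : ℂ))
      (Complex.I • (Complex.ofRealCLM.comp (innerSL ℝ w))) x := h1.const_mul _
  have h3 := h2.cexp
  have h4 := h3.const_mul z
  have h5 := Complex.reCLM.hasFDerivAt.comp x h4
  refine HasFDerivAt.congr_fderiv h5 ?_
  ext v
  simp [DK, eK]
  ring

lemma norm_DK_le (z : ℂ) (w x : EuclideanSpace ℝ (Fin d)) : ‖DK z w x‖ ≤ ‖z‖ * ‖w‖ := by
  refine ContinuousLinearMap.opNorm_le_bound _ (by positivity) fun v => ?_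
  rw [DK_apply]
  calc ‖(z * eK w x * Complex.I * ((inner ℝ w v : ℝ) : ℂ)).re‖
      ≤ ‖z * eK w x * Complex.I * ((inner ℝ w v : ℝ) : ℂ)‖ := by
        exact Complex.abs_re_le_norm _
    _ = ‖z‖ * |(inner ℝ w v : ℝ)| := by
        rw [norm_mul, norm_mul, norm_mul, norm_eK, Complex.norm_I, Complex.norm_real,
          Real.norm_eq_abs]
        ring
    _ ≤ ‖z‖ * (‖w‖ * ‖v‖) := by
        gcongr
        exact abs_real_inner_le_norm w v
    _ = ‖z‖ * ‖w‖ * ‖v‖ := by ring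

lemma continuous_eK (x : EuclideanSpace ℝ (Fin d)) :
    Continuous fun w : EuclideanSpace ℝ (Fin d) => eK w x := by
  exact Complex.continuous_exp.comp (continuous_const.mul
    (Complex.continuous_ofReal.comp (continuous_id.inner continuous_const)))

lemma continuous_DK {q : EuclideanSpace ℝ (Fin d) → ℂ} (hq : Continuous q)
    (x : EuclideanSpace ℝ (Fin d)) :
    Continuous fun k : EuclideanSpace ℝ (Fin d) => DK (q k) (-k) x := by
  unfold DK
  have hA : Continuous fun k : EuclideanSpace ℝ (Fin d) => q k * eK (-k) x * Complex.I :=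
    (hq.mul ((continuous_eK x).comp continuous_neg)).mul continuous_const
  have hB : Continuous fun k : EuclideanSpace ℝ (Fin d) =>
      Complex.ofRealCLM.comp (innerSL ℝ (-k)) :=
    ((ContinuousLinearMap.compL ℝ (EuclideanSpace ℝ (Fin d)) ℝ ℂ Complex.ofRealCLM).continuous).comp
      ((innerSL ℝ).continuous.comp continuous_neg)
  exact ((ContinuousLinearMap.compL ℝ (EuclideanSpace ℝ (Fin d)) ℂ ℝ Complex.reCLM).continuous).comp
    (hA.smul hB)

section Stage2

lemma continuous_eK' (w : EuclideanSpace ℝ (Fin d)) :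
    Continuous fun x : EuclideanSpace ℝ (Fin d) => eK w x :=
  Complex.continuous_exp.comp (continuous_const.mul
    (Complex.continuous_ofReal.comp (continuous_const.inner continuous_id)))

lemma continuous_eK2 :
    Continuous fun p : EuclideanSpace ℝ (Fin d) × EuclideanSpace ℝ (Fin d) => eK (-p.1) p.2 :=
  Complex.continuous_exp.comp (continuous_const.mul
    (Complex.continuous_ofReal.comp ((continuous_fst.neg).inner continuous_snd)))

lemma hasFDerivAt_int (q : EuclideanSpace ℝ (Fin d) → ℂ) (hq : Continuous q)
    (h0 : Integrable fun k => ‖q k‖) (h1 : Integrable fun k : EuclideanSpace ℝ (Fin d) => ‖q k‖ * ‖k‖)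
    (x : EuclideanSpace ℝ (Fin d)) :
    HasFDerivAt (fun y => ∫ k, (q k * eK (-k) y).re) (∫ k, DK (q k) (-k) x) x := by
  apply hasFDerivAt_integral_of_dominated_of_fderiv_le (s := Metric.ball x 1)
    (F' := fun y k => DK (q k) (-k) y)
    (bound := fun k : EuclideanSpace ℝ (Fin d) => ‖q k‖ * ‖k‖) (Metric.ball_mem_nhds x one_pos)
  · exact Filter.Eventually.of_forall fun y =>
      (Complex.continuous_re.comp (hq.mul ((continuous_eK y).comp continuous_neg))).aestronglyMeasurable
  · refine h0.mono' (Complex.continuous_re.comp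
      (hq.mul ((continuous_eK x).comp continuous_neg))).aestronglyMeasurable ?_
    refine Filter.Eventually.of_forall fun k => ?_
    calc ‖(q k * eK (-k) x).re‖ ≤ ‖q k * eK (-k) x‖ := Complex.abs_re_le_norm _
      _ = ‖q k‖ := by rw [norm_mul, norm_eK, mul_one]
  · exact (continuous_DK hq x).aestronglyMeasurable
  · refine Filter.Eventually.of_forall fun k => fun y _ => ?_
    have := norm_DK_le (q k) (-k) y
    rwa [norm_neg] at this
  · exact h1
  · exact Filter.Eventually.of_forall fun k => fun y _ => hasFDerivAt_DK (q k) (-k) y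

lemma integrable_DK (q : EuclideanSpace ℝ (Fin d) → ℂ) (hq : Continuous q)
    (h1 : Integrable fun k : EuclideanSpace ℝ (Fin d) => ‖q k‖ * ‖k‖)
    (x : EuclideanSpace ℝ (Fin d)) :
    Integrable fun k => DK (q k) (-k) x := by
  refine h1.mono' (continuous_DK hq x).aestronglyMeasurable ?_
  refine Filter.Eventually.of_forall fun k => ?_
  have := norm_DK_le (q k) (-k) x
  rwa [norm_neg] at this

lemma integrable_wInv_mul (lam : ℝ) (n : ℕ) (hn : (d : ℝ) + n < 2 * lam) :
    Integrable fun k : EuclideanSpace ℝ (Fin d) => ((1 + ‖k‖ ^ 2) ^ lam)⁻¹ * ‖k‖ ^ n := by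
  have hd : (finrank ℝ (EuclideanSpace ℝ (Fin d)) : ℝ) < 2 * lam - n := by
    rw [finrank_euclideanSpace_fin]; linarith
  have key := integrable_rpow_neg_one_add_norm_sq (E := EuclideanSpace ℝ (Fin d))
    (μ := volume) hd
  refine key.mono' ?_ (Filter.Eventually.of_forall fun k => ?_)
  · have hc : Continuous fun k : EuclideanSpace ℝ (Fin d) => ((1 + ‖k‖ ^ 2) ^ lam)⁻¹ :=
      ((continuous_const.add (continuous_norm.pow 2)).rpow_const
        (fun k => Or.inl (by simp only [Pi.add_apply, Pi.pow_apply]; positivity))).inv₀ fun k => by simp only [Pi.add_apply, Pi.pow_apply]; positivity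
    exact (hc.mul (continuous_norm.pow n)).aestronglyMeasurable
  · have hpos : (0:ℝ) < 1 + ‖k‖ ^ 2 := by positivity
    rw [Real.norm_eq_abs, _root_.abs_of_nonneg (by positivity)]
    have h1 : (‖k‖ : ℝ) ^ n ≤ (1 + ‖k‖ ^ 2) ^ ((n : ℝ) / 2) := by
      have e1 : ((‖k‖ ^ 2 : ℝ)) ^ ((n : ℝ) / 2) = ‖k‖ ^ n := by
        rw [← Real.rpow_natCast ‖k‖ 2, ← Real.rpow_mul (norm_nonneg k),
          ← Real.rpow_natCast ‖k‖ n]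
        congr 1
        ring
      rw [← e1]
      exact Real.rpow_le_rpow (by positivity) (by linarith [sq_nonneg ‖k‖]) (by positivity)
    calc ((1 + ‖k‖ ^ 2) ^ lam)⁻¹ * ‖k‖ ^ n
        ≤ ((1 + ‖k‖ ^ 2) ^ lam)⁻¹ * (1 + ‖k‖ ^ 2) ^ ((n : ℝ) / 2) := by
          have : (0:ℝ) ≤ ((1 + ‖k‖ ^ 2) ^ lam)⁻¹ := by positivity
          exact mul_le_mul_of_nonneg_left h1 this
      _ = (1 + ‖k‖ ^ 2) ^ (-(2 * lam - n) / 2) := by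
          rw [← Real.rpow_neg hpos.le, ← Real.rpow_add hpos]
          congr 1
          ring

end Stage2

section Stage3

noncomputable def charFA (d : ℕ) (ρ : Measure (EuclideanSpace ℝ (Fin d)))
    (k : EuclideanSpace ℝ (Fin d)) : ℂ :=
  ((2 * Real.pi) ^ (-(d : ℝ) / 2) : ℝ) * ∫ x, eK k x ∂ρ

lemma cPos : (0:ℝ) < (2 * Real.pi) ^ (-(d:ℝ)/2) :=
  Real.rpow_pos_of_pos (by positivity) _

lemma integrable_eK' (ρ : Measure (EuclideanSpace ℝ (Fin d))) [IsProbabilityMeasure ρ]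
    (w : EuclideanSpace ℝ (Fin d)) : Integrable (fun x => eK w x) ρ :=
  (integrable_const (1:ℝ)).mono' (continuous_eK' w).aestronglyMeasurable
    (Filter.Eventually.of_forall fun x => by simp [eK, Complex.norm_exp])

lemma continuous_charFA (ρ : Measure (EuclideanSpace ℝ (Fin d))) [IsProbabilityMeasure ρ] :
    Continuous (charFA d ρ) := by
  refine continuous_const.mul ?_
  refine continuous_of_dominated (bound := fun _ => (1:ℝ))
    (fun k => (continuous_eK' k).aestronglyMeasurable) ?_ (integrable_const 1) ?_
  · exact fun k => Filter.Eventually.of_forall fun x => le_of_eq (norm_eK k x)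
  · exact Filter.Eventually.of_forall fun x => continuous_eK x

lemma norm_charFA_le (ρ : Measure (EuclideanSpace ℝ (Fin d))) [IsProbabilityMeasure ρ]
    (k : EuclideanSpace ℝ (Fin d)) :
    ‖charFA d ρ k‖ ≤ (2 * Real.pi) ^ (-(d:ℝ)/2) := by
  rw [charFA, norm_mul, Complex.norm_real, Real.norm_eq_abs, _root_.abs_of_pos cPos]
  have h : ‖∫ x, eK k x ∂ρ‖ ≤ 1 := by
    calc ‖∫ x, eK k x ∂ρ‖ ≤ ∫ x, ‖eK k x‖ ∂ρ := norm_integral_le_integral_norm _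
      _ = 1 := by simp [eK, Complex.norm_exp]
  calc (2 * Real.pi) ^ (-(d:ℝ)/2) * ‖∫ x, eK k x ∂ρ‖
      ≤ (2 * Real.pi) ^ (-(d:ℝ)/2) * 1 := mul_le_mul_of_nonneg_left h cPos.le
    _ = _ := mul_one _

lemma integral_eK_neg (ρ : Measure (EuclideanSpace ℝ (Fin d))) [IsProbabilityMeasure ρ]
    (k : EuclideanSpace ℝ (Fin d)) :
    ∫ x, eK (-k) x ∂ρ = (starRingEnd ℂ) (∫ x, eK k x ∂ρ) := by
  rw [← integral_conj]
  congr 1; funext x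
  rw [eK, eK, ← Complex.exp_conj]
  congr 1
  simp [inner_neg_left]

lemma integral_re_eK (ρ : Measure (EuclideanSpace ℝ (Fin d))) [IsProbabilityMeasure ρ]
    (z : ℂ) (k : EuclideanSpace ℝ (Fin d)) :
    ∫ x, (z * eK (-k) x).re ∂ρ = (z * (starRingEnd ℂ) (∫ x, eK k x ∂ρ)).re := by
  rw [← integral_eK_neg]
  have hint : Integrable (fun x => z * eK (-k) x) ρ := (integrable_eK' ρ (-k)).const_mul z
  rw [← integral_const_mul]
  have := integral_re (μ := ρ) hint
  simpa using this

lemma continuous_intEK (ρ : Measure (EuclideanSpace ℝ (Fin d))) [IsProbabilityMeasure ρ] :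
    Continuous fun k : EuclideanSpace ℝ (Fin d) => ∫ x, eK k x ∂ρ := by
  refine continuous_of_dominated (bound := fun _ => (1:ℝ))
    (fun k => (continuous_eK' k).aestronglyMeasurable) ?_ (integrable_const 1) ?_
  · exact fun k => Filter.Eventually.of_forall fun x => le_of_eq (norm_eK k x)
  · exact Filter.Eventually.of_forall fun x => continuous_eK x

lemma norm_intEK_le (ρ : Measure (EuclideanSpace ℝ (Fin d))) [IsProbabilityMeasure ρ]
    (k : EuclideanSpace ℝ (Fin d)) : ‖∫ x, eK k x ∂ρ‖ ≤ 1 := by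
  calc ‖∫ x, eK k x ∂ρ‖ ≤ ∫ x, ‖eK k x‖ ∂ρ := norm_integral_le_integral_norm _
    _ = 1 := by simp [eK, Complex.norm_exp]

lemma conj_fourierKer (k x : EuclideanSpace ℝ (Fin d)) :
    (starRingEnd ℂ) (fourierKer d k x) =
      (((2 * Real.pi) ^ (-(d:ℝ)/2) : ℝ) : ℂ) * eK (-k) x := by
  rw [fourierKer, map_mul, Complex.conj_ofReal]
  congr 1
  rw [eK, ← Complex.exp_conj]
  congr 1
  simp [inner_neg_left]

end Stage3


section Stage4

variable (lam : ℝ) (μ ν : Measure (EuclideanSpace ℝ (Fin d)))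

/-- the weight `q₀(k) = F(k) c (1+‖k‖²)^{-λ}`. -/
noncomputable def q0A (k : EuclideanSpace ℝ (Fin d)) : ℂ :=
  (charF d μ k - charF d ν k) * (((2 * Real.pi) ^ (-(d : ℝ) / 2) : ℝ) : ℂ) *
    ((((1 + ‖k‖ ^ 2) ^ lam)⁻¹ : ℝ) : ℂ)

noncomputable def q1A (j : Fin d) (k : EuclideanSpace ℝ (Fin d)) : ℂ :=
  q0A lam μ ν k * Complex.I * ((-(k j) : ℝ) : ℂ)

variable [IsProbabilityMeasure μ] [IsProbabilityMeasure ν]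

lemma charF_eq_charFA (ρ : Measure (EuclideanSpace ℝ (Fin d))) : charF d ρ = charFA d ρ := rfl

lemma contF : Continuous fun k => charF d μ k - charF d ν k := by
  rw [charF_eq_charFA μ, charF_eq_charFA ν]
  exact (continuous_charFA μ).sub (continuous_charFA ν)

lemma normF_le (k : EuclideanSpace ℝ (Fin d)) :
    ‖charF d μ k - charF d ν k‖ ≤ 2 * (2 * Real.pi) ^ (-(d:ℝ)/2) := by
  rw [charF_eq_charFA μ, charF_eq_charFA ν]
  calc ‖charFA d μ k - charFA d ν k‖ ≤ ‖charFA d μ k‖ + ‖charFA d ν k‖ := norm_sub_le _ _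
    _ ≤ (2 * Real.pi) ^ (-(d:ℝ)/2) + (2 * Real.pi) ^ (-(d:ℝ)/2) :=
        add_le_add (norm_charFA_le μ k) (norm_charFA_le ν k)
    _ = _ := by ring

lemma contWInv : Continuous fun k : EuclideanSpace ℝ (Fin d) => ((1 + ‖k‖ ^ 2) ^ lam)⁻¹ :=
  ((continuous_const.add (continuous_norm.pow 2)).rpow_const
    (fun k => Or.inl (by simp only [Pi.add_apply, Pi.pow_apply]; positivity))).inv₀ fun k => by simp only [Pi.add_apply, Pi.pow_apply]; positivity

lemma contQ0 : Continuous (q0A (d := d) lam μ ν) :=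
  ((contF μ ν).mul continuous_const).mul (Complex.continuous_ofReal.comp (contWInv lam))

lemma normQ0_le (k : EuclideanSpace ℝ (Fin d)) :
    ‖q0A lam μ ν k‖ ≤ (2 * (2 * Real.pi) ^ (-(d:ℝ)/2) * (2 * Real.pi) ^ (-(d:ℝ)/2)) *
      ((1 + ‖k‖ ^ 2) ^ lam)⁻¹ := by
  rw [q0A, norm_mul, norm_mul, Complex.norm_real, Complex.norm_real, Real.norm_eq_abs,
    Real.norm_eq_abs, _root_.abs_of_pos (cPos (d := d)), _root_.abs_of_nonneg (by positivity)]
  have h := normF_le μ ν k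
  calc ‖charF d μ k - charF d ν k‖ * (2 * Real.pi) ^ (-(d:ℝ)/2) * ((1 + ‖k‖ ^ 2) ^ lam)⁻¹
      ≤ (2 * (2 * Real.pi) ^ (-(d:ℝ)/2)) * (2 * Real.pi) ^ (-(d:ℝ)/2) *
        ((1 + ‖k‖ ^ 2) ^ lam)⁻¹ := by
        have h1 : (0:ℝ) ≤ ((1 + ‖k‖ ^ 2) ^ lam)⁻¹ := by positivity
        have h2 : (0:ℝ) ≤ (2 * Real.pi) ^ (-(d:ℝ)/2) := (cPos (d := d)).le
        exact mul_le_mul_of_nonneg_right (mul_le_mul_of_nonneg_right h h2) h1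
    _ = _ := by ring

lemma intQ0 (hlam : (d:ℝ) + 2 < 2 * lam) (n : ℕ) (hn : n ≤ 2) :
    Integrable fun k : EuclideanSpace ℝ (Fin d) => ‖q0A lam μ ν k‖ * ‖k‖ ^ n := by
  set C : ℝ := 2 * (2 * Real.pi) ^ (-(d:ℝ)/2) * (2 * Real.pi) ^ (-(d:ℝ)/2) with hC
  have hn' : (d:ℝ) + n < 2 * lam := by
    have : (n:ℝ) ≤ 2 := by exact_mod_cast hn
    linarith
  refine ((integrable_wInv_mul lam n hn').const_mul C).mono'
    (((contQ0 lam μ ν).norm.mul (continuous_norm.pow n)).aestronglyMeasurable) ?_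
  refine Filter.Eventually.of_forall fun k => ?_
  rw [Real.norm_eq_abs, _root_.abs_of_nonneg (by positivity)]
  calc ‖q0A lam μ ν k‖ * ‖k‖ ^ n ≤ (C * ((1 + ‖k‖ ^ 2) ^ lam)⁻¹) * ‖k‖ ^ n := by
        gcongr
        exact normQ0_le lam μ ν k
    _ = C * (((1 + ‖k‖ ^ 2) ^ lam)⁻¹ * ‖k‖ ^ n) := by ring

lemma intQ0_one (hlam : (d:ℝ) + 2 < 2 * lam) :
    Integrable fun k : EuclideanSpace ℝ (Fin d) => ‖q0A lam μ ν k‖ * ‖k‖ := by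
  simpa using intQ0 lam μ ν hlam 1 (by norm_num)

lemma abs_apply_le_norm (k : EuclideanSpace ℝ (Fin d)) (j : Fin d) : |k j| ≤ ‖k‖ := by
  have h := abs_real_inner_le_norm k (EuclideanSpace.single j (1:ℝ))
  simpa [EuclideanSpace.inner_single_right] using h

lemma contQ1 (j : Fin d) : Continuous (q1A (d := d) lam μ ν j) := by
  unfold q1A
  exact ((contQ0 lam μ ν).mul continuous_const).mul
    (Complex.continuous_ofReal.comp ((EuclideanSpace.proj j).continuous.neg))

lemma normQ1_le (j : Fin d) (k : EuclideanSpace ℝ (Fin d)) :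
    ‖q1A lam μ ν j k‖ ≤ ‖q0A lam μ ν k‖ * ‖k‖ := by
  rw [q1A, norm_mul, norm_mul, Complex.norm_I, mul_one, Complex.norm_real, Real.norm_eq_abs,
    abs_neg]
  exact mul_le_mul_of_nonneg_left (abs_apply_le_norm k j) (norm_nonneg _)

lemma intQ1_0 (hlam : (d:ℝ) + 2 < 2 * lam) (j : Fin d) :
    Integrable fun k : EuclideanSpace ℝ (Fin d) => ‖q1A lam μ ν j k‖ := by
  have h := intQ0_one lam μ ν hlam
  refine h.mono' ((contQ1 lam μ ν j).norm.aestronglyMeasurable) ?_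
  refine Filter.Eventually.of_forall fun k => ?_
  rw [norm_norm]
  exact normQ1_le lam μ ν j k

lemma intQ1_1 (hlam : (d:ℝ) + 2 < 2 * lam) (j : Fin d) :
    Integrable fun k : EuclideanSpace ℝ (Fin d) => ‖q1A lam μ ν j k‖ * ‖k‖ := by
  have h := intQ0 lam μ ν hlam 2 (by norm_num)
  refine h.mono' (((contQ1 lam μ ν j).norm.mul continuous_norm).aestronglyMeasurable) ?_
  refine Filter.Eventually.of_forall fun k => ?_
  rw [Real.norm_eq_abs, _root_.abs_of_nonneg (by positivity)]
  calc ‖q1A lam μ ν j k‖ * ‖k‖ ≤ (‖q0A lam μ ν k‖ * ‖k‖) * ‖k‖ :=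
        mul_le_mul_of_nonneg_right (normQ1_le lam μ ν j k) (norm_nonneg _)
    _ = ‖q0A lam μ ν k‖ * ‖k‖ ^ 2 := by ring

lemma kappa_eq (ε : ℝ) (x : EuclideanSpace ℝ (Fin d)) :
    kappaFn d lam ε μ ν x = (1/ε) * ∫ k, (q0A lam μ ν k * eK (-k) x).re := by
  rw [kappaFn]
  congr 1
  congr 1
  funext k
  rw [conj_fourierKer, div_eq_inv_mul, ← Complex.re_ofReal_mul]
  congr 1
  rw [q0A]
  push_cast
  ring

lemma deriv1 (ε : ℝ) (hlam : (d:ℝ) + 2 < 2 * lam) (x : EuclideanSpace ℝ (Fin d)) :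
    HasFDerivAt (kappaFn d lam ε μ ν)
      ((1/ε) • ∫ k, DK (q0A lam μ ν k) (-k) x) x := by
  have hfun : kappaFn d lam ε μ ν = fun y => (1/ε) * ∫ k, (q0A lam μ ν k * eK (-k) y).re :=
    funext fun y => kappa_eq lam μ ν ε y
  rw [hfun]
  have h0 : Integrable fun k : EuclideanSpace ℝ (Fin d) => ‖q0A lam μ ν k‖ := by
    simpa using intQ0 lam μ ν hlam 0 (by norm_num)
  exact (hasFDerivAt_int _ (contQ0 lam μ ν) h0 (intQ0_one lam μ ν hlam) x).const_mul _

lemma fderiv1_apply (ε : ℝ) (hlam : (d:ℝ) + 2 < 2 * lam) (y : EuclideanSpace ℝ (Fin d))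
    (j : Fin d) :
    fderiv ℝ (kappaFn d lam ε μ ν) y (EuclideanSpace.single j 1) =
      (1/ε) * ∫ k, (q1A lam μ ν j k * eK (-k) y).re := by
  rw [(deriv1 lam μ ν ε hlam y).fderiv, ContinuousLinearMap.smul_apply,
    ContinuousLinearMap.integral_apply
      (integrable_DK _ (contQ0 lam μ ν) (intQ0_one lam μ ν hlam) y),
    smul_eq_mul]
  congr 1
  congr 1
  funext k
  rw [DK_apply]
  congr 1
  have hi : (inner ℝ (-k) (EuclideanSpace.single j (1:ℝ)) : ℝ) = -(k j) := by
    simp [EuclideanSpace.inner_single_right]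
  rw [hi, q1A]
  ring

lemma hess_integrand (z : ℂ) (a b : ℝ) (w x : EuclideanSpace ℝ (Fin d)) :
    (z * Complex.I * ((-b : ℝ):ℂ) * eK w x * Complex.I * ((-a : ℝ):ℂ)).re
      = (-(a*b)) * (z * eK w x).re := by
  have h : z * Complex.I * ((-b : ℝ):ℂ) * eK w x * Complex.I * ((-a : ℝ):ℂ)
      = ((-(a*b) : ℝ):ℂ) * (z * eK w x) := by
    have h2 : z * Complex.I * ((-b : ℝ):ℂ) * eK w x * Complex.I * ((-a : ℝ):ℂ)
        = (Complex.I * Complex.I) * (((-b : ℝ):ℂ) * ((-a : ℝ):ℂ)) * (z * eK w x) := by ring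
    rw [h2, Complex.I_mul_I]
    push_cast
    ring
  rw [h, Complex.re_ofReal_mul]

lemma hess_eq (ε : ℝ) (hlam : (d:ℝ) + 2 < 2 * lam) (x : EuclideanSpace ℝ (Fin d))
    (i j : Fin d) :
    hessEntry d (kappaFn d lam ε μ ν) x i j =
      (1/ε) * ∫ k, (-(k i * k j)) * (q0A lam μ ν k * eK (-k) x).re := by
  rw [hessEntry]
  have hfun : (fun y => fderiv ℝ (kappaFn d lam ε μ ν) y (EuclideanSpace.single j 1)) =
      fun y => (1/ε) * ∫ k, (q1A lam μ ν j k * eK (-k) y).re :=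
    funext fun y => fderiv1_apply lam μ ν ε hlam y j
  rw [hfun]
  have h2 : HasFDerivAt (fun y => (1/ε) * ∫ k, (q1A lam μ ν j k * eK (-k) y).re)
      ((1/ε) • ∫ k, DK (q1A lam μ ν j k) (-k) x) x :=
    (hasFDerivAt_int _ (contQ1 lam μ ν j) (intQ1_0 lam μ ν hlam j)
      (intQ1_1 lam μ ν hlam j) x).const_mul _
  rw [h2.fderiv, ContinuousLinearMap.smul_apply,
    ContinuousLinearMap.integral_apply
      (integrable_DK _ (contQ1 lam μ ν j) (intQ1_1 lam μ ν hlam j) x),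
    smul_eq_mul]
  congr 1
  congr 1
  funext k
  rw [DK_apply]
  have hi : (inner ℝ (-k) (EuclideanSpace.single i (1:ℝ)) : ℝ) = -(k i) := by
    simp [EuclideanSpace.inner_single_right]
  rw [hi, q1A]
  exact hess_integrand (q0A lam μ ν k) (k i) (k j) (-k) x

seal eK q0A charF charFA in
lemma contIntegrand (i j : Fin d) :
    Continuous fun p : EuclideanSpace ℝ (Fin d) × EuclideanSpace ℝ (Fin d) =>
      (-(p.2 i * p.2 j)) * (q0A lam μ ν p.2 * eK (-p.2) p.1).re := by
  refine Continuous.mul ?_ ?_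
  · exact (((EuclideanSpace.proj i).continuous.comp continuous_snd).mul
      ((EuclideanSpace.proj j).continuous.comp continuous_snd)).neg
  · refine Complex.continuous_re.comp (Continuous.mul ?_ ?_)
    · exact (contQ0 lam μ ν).snd'
    · exact continuous_eK2.comp (continuous_snd.prodMk continuous_fst)

seal eK q0A charF charFA in
lemma hess_int (ε : ℝ) (hlam : (d:ℝ) + 2 < 2 * lam)
    (ρ : Measure (EuclideanSpace ℝ (Fin d))) [IsProbabilityMeasure ρ] (i j : Fin d) :
    ∫ x, hessEntry d (kappaFn d lam ε μ ν) x i j ∂ρ =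
      (1/ε) * ∫ k, (-(k i * k j)) *
        (q0A lam μ ν k * (starRingEnd ℂ) (∫ x, eK k x ∂ρ)).re := by
  have h1 : ∫ x, hessEntry d (kappaFn d lam ε μ ν) x i j ∂ρ =
      ∫ x, ((1/ε) * ∫ k, (-(k i * k j)) * (q0A lam μ ν k * eK (-k) x).re) ∂ρ := by
    congr 1
    funext x
    rw [hess_eq lam μ ν ε hlam x i j]
  rw [h1, integral_const_mul]
  congr 1
  have hprod : Integrable (Function.uncurry fun x k =>
      (-(k i * k j)) * (q0A lam μ ν k * eK (-k) x).re) (ρ.prod volume) := by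
    have hb : Integrable (fun p : EuclideanSpace ℝ (Fin d) × EuclideanSpace ℝ (Fin d) =>
        (1:ℝ) * (‖q0A lam μ ν p.2‖ * ‖p.2‖ ^ 2)) (ρ.prod volume) :=
      Integrable.mul_prod (integrable_const 1) (intQ0 lam μ ν hlam 2 (by norm_num))
    refine hb.mono' ?_ ?_
    · exact (contIntegrand lam μ ν i j).aestronglyMeasurable
    · refine Filter.Eventually.of_forall fun p => ?_
      simp only [Function.uncurry]
      rw [one_mul, Real.norm_eq_abs, abs_mul, abs_neg, abs_mul]
      have h3 : |(q0A lam μ ν p.2 * eK (-p.2) p.1).re| ≤ ‖q0A lam μ ν p.2‖ := by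
        calc |(q0A lam μ ν p.2 * eK (-p.2) p.1).re| ≤ ‖q0A lam μ ν p.2 * eK (-p.2) p.1‖ :=
              Complex.abs_re_le_norm _
          _ = ‖q0A lam μ ν p.2‖ := by rw [norm_mul, norm_eK, mul_one]
      calc |p.2 i| * |p.2 j| * |(q0A lam μ ν p.2 * eK (-p.2) p.1).re|
          ≤ ‖p.2‖ * ‖p.2‖ * ‖q0A lam μ ν p.2‖ := by
            have hi' := abs_apply_le_norm p.2 i
            have hj' := abs_apply_le_norm p.2 j
            exact mul_le_mul (mul_le_mul hi' hj' (abs_nonneg _) (norm_nonneg _)) h3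
              (abs_nonneg _) (by positivity)
        _ = ‖q0A lam μ ν p.2‖ * ‖p.2‖ ^ 2 := by ring
  rw [MeasureTheory.integral_integral_swap hprod]
  congr 1
  funext k
  rw [integral_const_mul, integral_re_eK]

lemma charF_c_mul (ρ : Measure (EuclideanSpace ℝ (Fin d))) (k : EuclideanSpace ℝ (Fin d)) :
    charF d ρ k = (((2 * Real.pi) ^ (-(d:ℝ)/2) : ℝ) : ℂ) * ∫ x, eK k x ∂ρ := rfl

lemma intA (ε' : ℝ) (hlam : (d:ℝ) + 2 < 2 * lam) (ρ : Measure (EuclideanSpace ℝ (Fin d)))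
    [IsProbabilityMeasure ρ] (i j : Fin d) :
    Integrable fun k : EuclideanSpace ℝ (Fin d) =>
      (-(k i * k j)) * (q0A lam μ ν k * (starRingEnd ℂ) (∫ x, eK k x ∂ρ)).re := by
  have hc : Continuous fun k : EuclideanSpace ℝ (Fin d) =>
      (-(k i * k j)) * (q0A lam μ ν k * (starRingEnd ℂ) (∫ x, eK k x ∂ρ)).re := by
    refine Continuous.mul ?_ ?_
    · exact ((EuclideanSpace.proj i).continuous.mul (EuclideanSpace.proj j).continuous).neg
    · exact Complex.continuous_re.comp ((contQ0 lam μ ν).mul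
        (continuous_star.comp (continuous_intEK ρ)))
  refine (intQ0 lam μ ν hlam 2 (by norm_num)).mono' hc.aestronglyMeasurable ?_
  · refine Filter.Eventually.of_forall fun k => ?_
    rw [Real.norm_eq_abs, abs_mul, abs_neg, abs_mul]
    have h3 : |(q0A lam μ ν k * (starRingEnd ℂ) (∫ x, eK k x ∂ρ)).re| ≤ ‖q0A lam μ ν k‖ := by
      calc |(q0A lam μ ν k * (starRingEnd ℂ) (∫ x, eK k x ∂ρ)).re|
          ≤ ‖q0A lam μ ν k * (starRingEnd ℂ) (∫ x, eK k x ∂ρ)‖ := Complex.abs_re_le_norm _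
        _ = ‖q0A lam μ ν k‖ * ‖∫ x, eK k x ∂ρ‖ := by rw [norm_mul, RCLike.norm_conj]
        _ ≤ ‖q0A lam μ ν k‖ * 1 :=
            mul_le_mul_of_nonneg_left (norm_intEK_le ρ k) (norm_nonneg _)
        _ = ‖q0A lam μ ν k‖ := mul_one _
    calc |k i| * |k j| * |(q0A lam μ ν k * (starRingEnd ℂ) (∫ x, eK k x ∂ρ)).re|
        ≤ ‖k‖ * ‖k‖ * ‖q0A lam μ ν k‖ :=
          mul_le_mul (mul_le_mul (abs_apply_le_norm k i) (abs_apply_le_norm k j)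
            (abs_nonneg _) (norm_nonneg _)) h3 (abs_nonneg _) (by positivity)
      _ = ‖q0A lam μ ν k‖ * ‖k‖ ^ 2 := by ring

lemma pointwise_diff (i j : Fin d) (k : EuclideanSpace ℝ (Fin d)) :
    (-(k i * k j)) * (q0A lam μ ν k * (starRingEnd ℂ) (∫ x, eK k x ∂μ)).re -
      (-(k i * k j)) * (q0A lam μ ν k * (starRingEnd ℂ) (∫ x, eK k x ∂ν)).re =
    -(‖charF d μ k - charF d ν k‖ ^ 2 * (k i * k j) / (1 + ‖k‖ ^ 2) ^ lam) := by
  set c : ℝ := (2 * Real.pi) ^ (-(d:ℝ)/2) with hc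
  set IM : ℂ := ∫ x, eK k x ∂μ with hIM
  set IN : ℂ := ∫ x, eK k x ∂ν with hIN
  set w : ℝ := ((1 + ‖k‖ ^ 2) ^ lam)⁻¹ with hw
  have hFμ : charF d μ k = (c:ℂ) * IM := charF_c_mul μ k
  have hFν : charF d ν k = (c:ℂ) * IN := charF_c_mul ν k
  have hkey : q0A lam μ ν k * (starRingEnd ℂ) IM - q0A lam μ ν k * (starRingEnd ℂ) IN
      = ((c * c * w * Complex.normSq (IM - IN) : ℝ) : ℂ) := by
    rw [← mul_sub, ← map_sub, q0A, hFμ, hFν]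
    rw [show (c:ℂ) * IM - (c:ℂ) * IN = (c:ℂ) * (IM - IN) from by ring]
    rw [show (c:ℂ) * (IM - IN) * ((c:ℝ):ℂ) * ((w:ℝ):ℂ) * (starRingEnd ℂ) (IM - IN)
        = (((c:ℝ):ℂ) * ((c:ℝ):ℂ) * ((w:ℝ):ℂ)) * ((IM - IN) * (starRingEnd ℂ) (IM - IN))
        from by ring, Complex.mul_conj]
    push_cast
    ring
  have h2 : (q0A lam μ ν k * (starRingEnd ℂ) IM).re - (q0A lam μ ν k * (starRingEnd ℂ) IN).re
      = c * c * w * Complex.normSq (IM - IN) := by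
    rw [← Complex.sub_re, hkey, Complex.ofReal_re]
  have h3 : ‖charF d μ k - charF d ν k‖ ^ 2 = c * c * Complex.normSq (IM - IN) := by
    rw [hFμ, hFν, show (c:ℂ) * IM - (c:ℂ) * IN = (c:ℂ) * (IM - IN) from by ring]
    rw [Complex.sq_norm, Complex.normSq_mul, Complex.normSq_ofReal]
  rw [show (-(k i * k j)) * (q0A lam μ ν k * (starRingEnd ℂ) IM).re -
      (-(k i * k j)) * (q0A lam μ ν k * (starRingEnd ℂ) IN).re
      = (-(k i * k j)) * ((q0A lam μ ν k * (starRingEnd ℂ) IM).re -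
        (q0A lam μ ν k * (starRingEnd ℂ) IN).re) from by ring, h2, h3, div_eq_mul_inv, ← hw]
  ring

lemma contG (i j : Fin d) :
    Continuous fun k : EuclideanSpace ℝ (Fin d) =>
      ‖charF d μ k - charF d ν k‖ ^ 2 * (k i * k j) / (1 + ‖k‖ ^ 2) ^ lam := by
  have h1 : Continuous fun k : EuclideanSpace ℝ (Fin d) =>
      ‖charF d μ k - charF d ν k‖ ^ 2 * (k i * k j) :=
    ((contF μ ν).norm.pow 2).mul
      ((EuclideanSpace.proj i).continuous.mul (EuclideanSpace.proj j).continuous)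
  have h2 : Continuous fun k : EuclideanSpace ℝ (Fin d) => (1 + ‖k‖ ^ 2) ^ lam :=
    (continuous_const.add (continuous_norm.pow 2)).rpow_const (fun k => Or.inl (by simp only [Pi.add_apply, Pi.pow_apply]; positivity))
  exact h1.div h2 fun k => by positivity

lemma intG (hlam : (d:ℝ) + 2 < 2 * lam) (i j : Fin d) :
    Integrable fun k : EuclideanSpace ℝ (Fin d) =>
      ‖charF d μ k - charF d ν k‖ ^ 2 * (k i * k j) / (1 + ‖k‖ ^ 2) ^ lam := by
  set C : ℝ := (2 * (2 * Real.pi) ^ (-(d:ℝ)/2)) ^ 2 with hC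
  have hn' : (d:ℝ) + 2 < 2 * lam := hlam
  have h2' : (2:ℕ) = ((2:ℕ):ℕ) := rfl
  refine ((integrable_wInv_mul lam 2 (by push_cast; linarith)).const_mul C).mono'
    (contG lam μ ν i j).aestronglyMeasurable ?_
  refine Filter.Eventually.of_forall fun k => ?_
  rw [Real.norm_eq_abs, div_eq_mul_inv, abs_mul, abs_mul, _root_.abs_of_nonneg
    (inv_nonneg.mpr (Real.rpow_nonneg (by positivity) _)), _root_.abs_of_nonneg (by positivity)]
  have hF2 : ‖charF d μ k - charF d ν k‖ ^ 2 ≤ C := by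
    rw [hC]
    have := normF_le μ ν k
    have h0 : (0:ℝ) ≤ ‖charF d μ k - charF d ν k‖ := norm_nonneg _
    nlinarith
  calc ‖charF d μ k - charF d ν k‖ ^ 2 * |k i * k j| * ((1 + ‖k‖ ^ 2) ^ lam)⁻¹
      ≤ C * ‖k‖ ^ 2 * ((1 + ‖k‖ ^ 2) ^ lam)⁻¹ := by
        refine mul_le_mul_of_nonneg_right ?_ (by positivity)
        refine mul_le_mul hF2 ?_ (abs_nonneg _) (by positivity)
        rw [abs_mul, sq]
        exact mul_le_mul (abs_apply_le_norm k i) (abs_apply_le_norm k j)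
          (abs_nonneg _) (norm_nonneg _)
    _ = C * (((1 + ‖k‖ ^ 2) ^ lam)⁻¹ * ‖k‖ ^ 2) := by ring

end Stage4

end AuxStmt7

attribute [local irreducible] eK q0A charF charFA

/-- `∫ ∇²κ d(μ-ν) = -(1/ε) ∫ |F_k(μ-ν)|² k kᵀ /(1+|k|²)^λ dk`, a negative
semidefinite matrix. -/
theorem stmt_7 (d : ℕ) (lam : ℝ) (hlam : 2 * lam > d + 2) (ε : ℝ) (hε : 0 < ε)
    (μ ν : Measure (EuclideanSpace ℝ (Fin d)))
    [IsProbabilityMeasure μ] [IsProbabilityMeasure ν] :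
    (Matrix.of fun i j : Fin d =>
        (∫ x, hessEntry d (kappaFn d lam ε μ ν) x i j ∂μ) -
          ∫ x, hessEntry d (kappaFn d lam ε μ ν) x i j ∂ν) =
      Matrix.of (fun i j : Fin d =>
        -(1 / ε) * ∫ k : EuclideanSpace ℝ (Fin d),
          ‖charF d μ k - charF d ν k‖ ^ 2 * (k i * k j) / (1 + ‖k‖ ^ 2) ^ lam) ∧
    Matrix.PosSemidef (-(Matrix.of fun i j : Fin d =>
        (∫ x, hessEntry d (kappaFn d lam ε μ ν) x i j ∂μ) -
          ∫ x, hessEntry d (kappaFn d lam ε μ ν) x i j ∂ν)) := by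
  have hlam2 : (d:ℝ) + 2 < 2 * lam := by exact_mod_cast hlam
  have part1 : (Matrix.of fun i j : Fin d =>
        (∫ x, hessEntry d (kappaFn d lam ε μ ν) x i j ∂μ) -
          ∫ x, hessEntry d (kappaFn d lam ε μ ν) x i j ∂ν) =
      Matrix.of (fun i j : Fin d =>
        -(1 / ε) * ∫ k : EuclideanSpace ℝ (Fin d),
          ‖charF d μ k - charF d ν k‖ ^ 2 * (k i * k j) / (1 + ‖k‖ ^ 2) ^ lam) := by
    ext i j
    simp only [Matrix.of_apply]
    rw [hess_int lam μ ν ε hlam2 μ i j, hess_int lam μ ν ε hlam2 ν i j, ← mul_sub,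
      ← integral_sub (intA lam μ ν ε hlam2 μ i j) (intA lam μ ν ε hlam2 ν i j)]
    have hcong : ∫ k : EuclideanSpace ℝ (Fin d),
        ((-(k i * k j)) * (q0A lam μ ν k * (starRingEnd ℂ) (∫ x, eK k x ∂μ)).re -
          (-(k i * k j)) * (q0A lam μ ν k * (starRingEnd ℂ) (∫ x, eK k x ∂ν)).re) =
        ∫ k : EuclideanSpace ℝ (Fin d),
          -(‖charF d μ k - charF d ν k‖ ^ 2 * (k i * k j) / (1 + ‖k‖ ^ 2) ^ lam) := by
      congr 1
      funext k
      exact pointwise_diff lam μ ν i j k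
    rw [hcong, integral_neg]
    ring
  refine ⟨part1, ?_⟩
  rw [part1]
  have hNeg : -(Matrix.of (fun i j : Fin d =>
      -(1 / ε) * ∫ k : EuclideanSpace ℝ (Fin d),
        ‖charF d μ k - charF d ν k‖ ^ 2 * (k i * k j) / (1 + ‖k‖ ^ 2) ^ lam)) =
      Matrix.of (fun i j : Fin d =>
        (1 / ε) * ∫ k : EuclideanSpace ℝ (Fin d),
          ‖charF d μ k - charF d ν k‖ ^ 2 * (k i * k j) / (1 + ‖k‖ ^ 2) ^ lam) := by
    ext i j
    simp only [Matrix.neg_apply, Matrix.of_apply]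
    ring
  rw [hNeg]
  rw [Matrix.posSemidef_iff_dotProduct_mulVec]
  constructor
  · -- Hermitian
    show _ = _
    ext i j
    simp only [Matrix.conjTranspose_apply, Matrix.of_apply, star_trivial]
    congr 1
    congr 1
    funext k
    ring
  · intro v
    have hg : ∀ i j : Fin d, Integrable fun k : EuclideanSpace ℝ (Fin d) =>
        ‖charF d μ k - charF d ν k‖ ^ 2 * (k i * k j) / (1 + ‖k‖ ^ 2) ^ lam :=
      fun i j => intG lam μ ν hlam2 i j
    have e2 : ∫ k : EuclideanSpace ℝ (Fin d), (∑ i, ∑ j, (v i * v j) *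
          (‖charF d μ k - charF d ν k‖ ^ 2 * (k i * k j) / (1 + ‖k‖ ^ 2) ^ lam)) =
        ∑ i, ∑ j, ∫ k : EuclideanSpace ℝ (Fin d), (v i * v j) *
          (‖charF d μ k - charF d ν k‖ ^ 2 * (k i * k j) / (1 + ‖k‖ ^ 2) ^ lam) := by
      rw [integral_finset_sum _ (fun i _ => integrable_finset_sum _
        (fun j _ => (hg i j).const_mul _))]
      exact Finset.sum_congr rfl fun i _ => integral_finset_sum _
        (fun j _ => (hg i j).const_mul _)
    have key : dotProduct (star v) (Matrix.mulVec (Matrix.of (fun i j : Fin d =>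
        (1 / ε) * ∫ k : EuclideanSpace ℝ (Fin d),
          ‖charF d μ k - charF d ν k‖ ^ 2 * (k i * k j) / (1 + ‖k‖ ^ 2) ^ lam)) v) =
        (1/ε) * ∫ k : EuclideanSpace ℝ (Fin d), (∑ i, ∑ j, (v i * v j) *
          (‖charF d μ k - charF d ν k‖ ^ 2 * (k i * k j) / (1 + ‖k‖ ^ 2) ^ lam)) := by
      rw [e2, Finset.mul_sum]
      simp only [dotProduct, Matrix.mulVec, Matrix.of_apply, star_trivial]
      refine Finset.sum_congr rfl fun i _ => ?_
      simp only [Finset.mul_sum]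
      refine Finset.sum_congr rfl fun j _ => ?_
      rw [integral_const_mul]
      ring
    rw [key]
    have hptw : ∀ k : EuclideanSpace ℝ (Fin d), ∑ i, ∑ j, (v i * v j) *
        (‖charF d μ k - charF d ν k‖ ^ 2 * (k i * k j) / (1 + ‖k‖ ^ 2) ^ lam) =
        ‖charF d μ k - charF d ν k‖ ^ 2 * (∑ i, v i * k i) ^ 2 / (1 + ‖k‖ ^ 2) ^ lam := by
      intro k
      rw [sq (∑ i, v i * k i), Finset.sum_mul_sum]
      rw [Finset.mul_sum, Finset.sum_div]
      refine Finset.sum_congr rfl fun i _ => ?_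
      rw [Finset.mul_sum, Finset.sum_div]
      refine Finset.sum_congr rfl fun j _ => ?_
      ring
    have hnn : 0 ≤ ∫ k : EuclideanSpace ℝ (Fin d), (∑ i, ∑ j, (v i * v j) *
        (‖charF d μ k - charF d ν k‖ ^ 2 * (k i * k j) / (1 + ‖k‖ ^ 2) ^ lam)) := by
      refine integral_nonneg fun k => ?_
      rw [hptw k]
      positivity
    have hε' : (0:ℝ) ≤ 1/ε := by positivity
    exact mul_nonneg hε' hnn
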